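/- Let X, Y, Z be discrete random variables with finite support on a common probability space, with probability mass functions p_X, p_Y, p_Z. If X ⊥⊥ Z, X ≤ι (Y, Z), X ⊥⊥ Y, and p_Y majorizes p_X, then: X and Y are each uniformly distributed with the same cardinality, Y ⊥⊥ Z, and Y ≤ι (X, Z). -/

import Mathlib

namespace Paper

/-- The probability of an event under a probability mass function. -/
noncomputable def pr {Ω : Type} (μ : PMF Ω) (E : Set Ω) : ENNReal :=
  μ.toOuterMeasure E

/-- Conditional independence `X ⊥⊥ Y | Z`:
`p(x,y,z) p(z) = p(x,z) p(y,z)` for all `x, y, z`. -/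
def CondIndep {Ω α β γ : Type} (μ : PMF Ω) (X : Ω → α) (Y : Ω → β) (Z : Ω → γ) : Prop :=
  ∀ (x : α) (y : β) (z : γ),
    pr μ {ω | X ω = x ∧ Y ω = y ∧ Z ω = z} * pr μ {ω | Z ω = z}
      = pr μ {ω | X ω = x ∧ Z ω = z} * pr μ {ω | Y ω = y ∧ Z ω = z}

/-- Unconditional independence `X ⊥⊥ Y`. -/
def Indep {Ω α β : Type} (μ : PMF Ω) (X : Ω → α) (Y : Ω → β) : Prop :=
  ∀ (x : α) (y : β),
    pr μ {ω | X ω = x ∧ Y ω = y} = pr μ {ω | X ω = x} * pr μ {ω | Y ω = y}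

/-- `X ≥ι Y`: `X` functionally determines `Y` (with probability one). -/
def FunDep {Ω α β : Type} (μ : PMF Ω) (X : Ω → α) (Y : Ω → β) : Prop :=
  ∃ f : α → β, ∀ ω ∈ μ.support, Y ω = f (X ω)

/-- `X =ι Y`: informational equivalence. -/
def InfoEq {Ω α β : Type} (μ : PMF Ω) (X : Ω → α) (Y : Ω → β) : Prop :=
  FunDep μ X Y ∧ FunDep μ Y X

/-- The random variable `X` has finite support. -/
def FinSupp {Ω α : Type} (μ : PMF Ω) (X : Ω → α) : Prop :=
  (X '' μ.support).Finite

/-- The random variable `X` has support of cardinality at most `ℓ`. -/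
def CardLE {Ω α : Type} (μ : PMF Ω) (X : Ω → α) (ℓ : ℕ) : Prop :=
  ∃ s : Finset α, s.card ≤ ℓ ∧ ∀ ω ∈ μ.support, X ω ∈ s

/-- `X` is uniformly distributed with support of cardinality `ℓ`. -/
def UniformCard {Ω α : Type} (μ : PMF Ω) (X : Ω → α) (ℓ : ℕ) : Prop :=
  ∃ S : Finset α, S.card = ℓ ∧ (∀ x ∈ S, pr μ {ω | X ω = x} = (ℓ : ENNReal)⁻¹) ∧
    ∀ x, x ∉ S → pr μ {ω | X ω = x} = 0

/-- The probability mass function of the random variable `X`. -/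
noncomputable def distOf {Ω α : Type} (μ : PMF Ω) (X : Ω → α) : α → ENNReal :=
  fun x => pr μ {ω | X ω = x}

/-- `p ⪰ q` : `p` majorizes `q`, i.e. for every `k`, the sum of the `k` largest values
of `p` is at least the sum of the `k` largest values of `q`. -/
def Majorizes (p q : ℕ → ENNReal) : Prop :=
  ∀ s : Finset ℕ, ∃ t : Finset ℕ, t.card ≤ s.card ∧ ∑ x ∈ s, q x ≤ ∑ x ∈ t, p x

/-- `T` is a sufficient statistic of `X` for `U`: `X ≥ι T` and `U ⊥⊥ X | T`. -/
def SuffStat {Ω α β γ : Type} (μ : PMF Ω) (X : Ω → α) (U : Ω → β) (T : Ω → γ) : Prop :=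
  FunDep μ X T ∧ CondIndep μ U X T

/-- `T` is a minimal sufficient statistic of `X` for `U`. -/
def MinSuffStat {Ω α β γ : Type} (μ : PMF Ω) (X : Ω → α) (U : Ω → β) (T : Ω → γ) : Prop :=
  SuffStat μ X U T ∧
    ∀ (δ : Type) (T' : Ω → δ), SuffStat μ X U T' → FunDep μ T' T

/-- Mutual independence of the subfamily `(V i)_{i ∈ s}`: each `V i` (for `i ∈ s`) is
independent of the joint variable of the others. -/
def MutIndepOn {Ω ι : Type} {β : ι → Type} (μ : PMF Ω) (V : ∀ i, Ω → β i)
    (s : Finset ι) : Prop :=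
  ∀ i ∈ s, Indep μ (V i) (fun ω => fun j : {j // j ∈ s ∧ j ≠ i} => V j.1 ω)

/-- Mutual independence of the whole family `(V i)_i`. -/
def MutIndep {Ω ι : Type} {β : ι → Type} (μ : PMF Ω) (V : ∀ i, Ω → β i) : Prop :=
  ∀ i, Indep μ (V i) (fun ω => fun j : {j // j ≠ i} => V j.1 ω)

/-- Mutual independence of `(V i)_{i ∈ C}` for a list `C` of indices. -/
def MutIndepL {Ω : Type} (μ : PMF Ω) (V : ℕ → Ω → ℕ) (C : List ℕ) : Prop :=
  ∀ i ∈ C, Indep μ (V i) (fun ω => fun j : {j // j ∈ C ∧ j ≠ i} => V j.1 ω)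

/-- The joint random variable `(X a)_{a ∈ A}` for a list `A` of indices. -/
def jointOn {Ω : Type} (X : ℕ → Ω → ℕ) (A : List ℕ) : Ω → ({a : ℕ // a ∈ A} → ℕ) :=
  fun ω a => X a.1 ω

/-- The joint random variable `(T i)_{i ∈ S}` for a finset `S` of indices. -/
def jointFin {Ω ι : Type} {β : ι → Type} (T : ∀ i, Ω → β i) (S : Finset ι) :
    Ω → ((i : {i // i ∈ S}) → β i.1) :=
  fun ω i => T i.1 ω

/-- The set of parents (in-neighbours) of `w` in the directed graph with edge relation `E`. -/
def parentSet {ν : Type} (E : ν → ν → Prop) (w : ν) : Set ν := {v | E v w}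

/-- The set of nodes that are neither descendants nor parents of `w`. -/
def nonDescSet {ν : Type} (E : ν → ν → Prop) (w : ν) : Set ν :=
  {v | ¬ Relation.ReflTransGen E w v ∧ ¬ E v w}

/-- The collection of random variables `(X v)_v` satisfies the Bayesian network structure
with edge relation `E`: each variable is conditionally independent of its
non-descendant non-parent variables given its parent variables. -/
def SatisfiesBN {Ω ν : Type} {β : ν → Type} (μ : PMF Ω) (X : ∀ v, Ω → β v)
    (E : ν → ν → Prop) : Prop :=
  ∀ w : ν, CondIndep μ (X w)
    (fun ω => fun v : nonDescSet E w => X v.1 ω)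
    (fun ω => fun v : parentSet E w => X v.1 ω)

/-- `E` is (the edge list of) a directed acyclic graph on the nodes `{0, …, n-1}`. -/
def IsDAG (n : ℕ) (E : List (ℕ × ℕ)) : Prop :=
  (∀ e ∈ E, e.1 < n ∧ e.2 < n) ∧
    ∀ i : ℕ, ¬ Relation.TransGen (fun a c => (a, c) ∈ E) i i

/-- The edge relation on `Fin n` determined by an edge list. -/
def edgeRelOn (n : ℕ) (E : List (ℕ × ℕ)) : Fin n → Fin n → Prop :=
  fun i j => ((i : ℕ), (j : ℕ)) ∈ E

/-- `(X_0, …, X_{n-1})` satisfies the Bayesian network given by the edge list `E`. -/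
def SatisfiesBNn {Ω : Type} (μ : PMF Ω) (n : ℕ) (X : ℕ → Ω → ℕ)
    (E : List (ℕ × ℕ)) : Prop :=
  SatisfiesBN μ (fun i : Fin n => X (i : ℕ)) (edgeRelOn n E)

/-- `(A, C, B) ∈ I(G_1, …, G_m)`: every collection of finitely supported discrete random
variables satisfying all the network structures in `Gs` satisfies `X_A ⊥⊥ X_B | X_C`. -/
def ImpliedCI (n : ℕ) (Gs : List (List (ℕ × ℕ))) (A C B : List ℕ) : Prop :=
  ∀ (Ω : Type) (μ : PMF Ω) (X : ℕ → Ω → ℕ),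
    (∀ i, i < n → FinSupp μ (X i)) →
    (∀ G ∈ Gs, SatisfiesBNn μ n X G) →
    CondIndep μ (jointOn X A) (jointOn X B) (jointOn X C)

/-- Two lists are disjoint as sets. -/
def DisjointL (A B : List ℕ) : Prop := ∀ a ∈ A, a ∉ B

end Paper
namespace Paper

section aux
variable {Ω : Type} {μ : PMF Ω}

lemma pr_eq_tsum (μ : PMF Ω) (E : Set Ω) : pr μ E = ∑' ω, E.indicator μ ω :=
  PMF.toOuterMeasure_apply μ E

lemma pr_eq_zero_iff {E : Set Ω} : pr μ E = 0 ↔ ∀ ω ∈ μ.support, ω ∉ E := by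
  rw [pr, PMF.toOuterMeasure_apply_eq_zero_iff, Set.disjoint_left]

lemma pr_ne_zero {E : Set Ω} {ω : Ω} (h1 : ω ∈ μ.support) (h2 : ω ∈ E) : pr μ E ≠ 0 := by
  intro h; exact (pr_eq_zero_iff.mp h) ω h1 h2

lemma pr_congr {E F : Set Ω} (h : ∀ ω ∈ μ.support, ω ∈ E ↔ ω ∈ F) : pr μ E = pr μ F := by
  classical
  rw [pr_eq_tsum, pr_eq_tsum]
  refine tsum_congr fun ω => ?_
  by_cases hω : μ ω = 0
  · simp [Set.indicator_apply, hω]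
  · have := h ω hω
    simp [Set.indicator_apply, this]

lemma pr_mono {E F : Set Ω} (h : E ⊆ F) : pr μ E ≤ pr μ F :=
  μ.toOuterMeasure.mono h

lemma pr_univ (μ : PMF Ω) : pr μ Set.univ = 1 := by
  rw [pr, PMF.toOuterMeasure_apply_eq_one_iff]
  exact Set.subset_univ _

lemma pr_le_one (μ : PMF Ω) (E : Set Ω) : pr μ E ≤ 1 := by
  rw [← pr_univ μ]; exact pr_mono (Set.subset_univ E)

lemma pr_ne_top (μ : PMF Ω) (E : Set Ω) : pr μ E ≠ ⊤ :=
  fun h => by simpa [h] using pr_le_one μ E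

lemma pr_fiber_sum (μ : PMF Ω) (E : Set Ω) (g : Ω → ℕ) (S : Finset ℕ)
    (hg : ∀ ω ∈ μ.support, g ω ∈ S) :
    pr μ E = ∑ z ∈ S, pr μ {ω | ω ∈ E ∧ g ω = z} := by
  classical
  simp only [pr_eq_tsum]
  rw [← Summable.tsum_finsetSum (fun i _ => ENNReal.summable)]
  refine tsum_congr fun ω => ?_
  by_cases hω : μ ω = 0
  · simp [Set.indicator_apply, hω]
  · by_cases hE : ω ∈ E
    · have : ∀ z ∈ S, Set.indicator {ω | ω ∈ E ∧ g ω = z} μ ω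
          = if g ω = z then μ ω else 0 := by
        intro z _; simp [Set.indicator_apply, hE]
      rw [Finset.sum_congr rfl this]
      simp only [Set.indicator_of_mem hE]
      rw [Finset.sum_ite_eq S (g ω) (fun _ => μ ω), if_pos (hg ω hω)]
    · simp [Set.indicator_apply, hE]

lemma sum_eq_of_le_of_sum_eq {ι : Type} {s : Finset ι} {f g : ι → ENNReal}
    (hle : ∀ i ∈ s, f i ≤ g i) (heq : ∑ i ∈ s, f i = ∑ i ∈ s, g i)
    (hfin : ∑ i ∈ s, g i ≠ ⊤) : ∀ i ∈ s, f i = g i := by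
  classical
  intro i hi
  by_contra hne
  have hlt : f i < g i := lt_of_le_of_ne (hle i hi) hne
  have h1 : ∑ j ∈ s, f j = f i + ∑ j ∈ s.erase i, f j := by
    rw [Finset.add_sum_erase _ _ hi]
  have h2 : ∑ j ∈ s, g j = g i + ∑ j ∈ s.erase i, g j := by
    rw [Finset.add_sum_erase _ _ hi]
  have hfin2 : ∑ j ∈ s.erase i, g j ≠ ⊤ := by
    intro h
    apply hfin
    rw [h2, h, add_top]
  have hcon : ∑ j ∈ s, f j < ∑ j ∈ s, g j := by
    rw [h1, h2]
    calc f i + ∑ j ∈ s.erase i, f j ≤ f i + ∑ j ∈ s.erase i, g j := by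
          gcongr with j hj; exact hle _ (Finset.mem_of_mem_erase hj)
      _ < g i + ∑ j ∈ s.erase i, g j := ENNReal.add_lt_add_right hfin2 hlt
  exact absurd heq hcon.ne

lemma mul_right_cancel_ennreal {a b c : ENNReal} (hc0 : c ≠ 0) (hct : c ≠ ⊤)
    (h : a * c = b * c) : a = b := (ENNReal.mul_left_inj hc0 hct).mp h

noncomputable def topSum (p : ℕ → ENNReal) (S : Finset ℕ) (k : ℕ) : ENNReal :=
  (S.powerset.filter fun t => t.card ≤ k).sup fun t => ∑ x ∈ t, p x

lemma le_topSum {p : ℕ → ENNReal} {S : Finset ℕ} (hp : ∀ x, p x ≠ 0 → x ∈ S)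
    {k : ℕ} (t : Finset ℕ) (ht : t.card ≤ k) : ∑ x ∈ t, p x ≤ topSum p S k := by
  classical
  have h1 : ∑ x ∈ t, p x = ∑ x ∈ t ∩ S, p x := by
    refine (Finset.sum_subset Finset.inter_subset_left ?_).symm
    intro x hx hnx
    by_contra hpx
    exact hnx (Finset.mem_inter.mpr ⟨hx, hp x hpx⟩)
  rw [h1]
  refine Finset.le_sup (f := fun u => ∑ x ∈ u, p x) ?_
  refine Finset.mem_filter.mpr ⟨Finset.mem_powerset.mpr Finset.inter_subset_right, ?_⟩
  exact le_trans (Finset.card_le_card Finset.inter_subset_left) ht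

lemma topSum_exists (p : ℕ → ENNReal) (S : Finset ℕ) (k : ℕ) :
    ∃ t : Finset ℕ, t ⊆ S ∧ t.card ≤ k ∧ ∑ x ∈ t, p x = topSum p S k := by
  classical
  obtain ⟨t, ht, hsup⟩ := Finset.exists_mem_eq_sup (S.powerset.filter fun t => t.card ≤ k)
    ⟨∅, by simp⟩ (fun t => ∑ x ∈ t, p x)
  obtain ⟨h1, h2⟩ := Finset.mem_filter.mp ht
  exact ⟨t, Finset.mem_powerset.mp h1, h2, hsup.symm⟩

lemma topSum_le_total (p : ℕ → ENNReal) (S : Finset ℕ) (k : ℕ) :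
    topSum p S k ≤ ∑ x ∈ S, p x := by
  refine Finset.sup_le (fun t ht => ?_)
  exact Finset.sum_le_sum_of_subset (Finset.mem_powerset.mp (Finset.mem_filter.mp ht).1)

lemma topSum_mono (p : ℕ → ENNReal) (S : Finset ℕ) {k k' : ℕ} (h : k ≤ k') :
    topSum p S k ≤ topSum p S k' := by
  refine Finset.sup_le (fun t ht => ?_)
  obtain ⟨h1, h2⟩ := Finset.mem_filter.mp ht
  exact Finset.le_sup (f := fun t => ∑ x ∈ t, p x) (Finset.mem_filter.mpr ⟨h1, h2.trans h⟩)

end aux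

/-- Second part of Lemma 4 of the paper: if `X ⊥⊥ Z`, `X ≤ι (Y, Z)`, `X ⊥⊥ Y` and
`p_Y ⪰ p_X`, then `X` and `Y` are uniformly distributed with the same cardinality,
`Y ⊥⊥ Z` and `Y ≤ι (X, Z)`. -/
theorem majorization_forces_uniform {Ω : Type} (μ : PMF Ω) (X Y Z : Ω → ℕ)
    (hX : FinSupp μ X) (hY : FinSupp μ Y) (hZ : FinSupp μ Z)
    (hXZ : Indep μ X Z)
    (hfd : FunDep μ (fun ω => (Y ω, Z ω)) X)
    (hXY : Indep μ X Y)
    (hmaj : Majorizes (distOf μ Y) (distOf μ X)) :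
    (∃ ℓ : ℕ, 1 ≤ ℓ ∧ UniformCard μ X ℓ ∧ UniformCard μ Y ℓ) ∧
    Indep μ Y Z ∧
    FunDep μ (fun ω => (X ω, Z ω)) Y := by
  classical
  obtain ⟨f, hf0⟩ := hfd
  have hf : ∀ ω ∈ μ.support, X ω = f (Y ω, Z ω) := hf0
  set a : ℕ → ENNReal := distOf μ X with ha
  set b : ℕ → ENNReal := distOf μ Y with hb
  set c : ℕ → ENNReal := distOf μ Z with hc
  set q : ℕ → ℕ → ENNReal := fun y z => pr μ {ω | Y ω = y ∧ Z ω = z} with hqdef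
  set SX : Finset ℕ := hX.toFinset with hSXdef
  set SY : Finset ℕ := hY.toFinset with hSYdef
  set SZ : Finset ℕ := hZ.toFinset with hSZdef
  have hXmem : ∀ ω ∈ μ.support, X ω ∈ SX := fun ω h => hX.mem_toFinset.mpr ⟨ω, h, rfl⟩
  have hYmem : ∀ ω ∈ μ.support, Y ω ∈ SY := fun ω h => hY.mem_toFinset.mpr ⟨ω, h, rfl⟩
  have hZmem : ∀ ω ∈ μ.support, Z ω ∈ SZ := fun ω h => hZ.mem_toFinset.mpr ⟨ω, h, rfl⟩
  have haS : ∀ x, a x ≠ 0 → x ∈ SX := by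
    intro x hx
    by_contra hmem
    refine hx (pr_eq_zero_iff.mpr ?_)
    intro ω hω hE
    exact hmem (hE ▸ hXmem ω hω)
  have hbS : ∀ y, b y ≠ 0 → y ∈ SY := by
    intro y hy
    by_contra hmem
    refine hy (pr_eq_zero_iff.mpr ?_)
    intro ω hω hE
    exact hmem (hE ▸ hYmem ω hω)
  have hcS : ∀ z, c z ≠ 0 → z ∈ SZ := by
    intro z hz
    by_contra hmem
    refine hz (pr_eq_zero_iff.mpr ?_)
    intro ω hω hE
    exact hmem (hE ▸ hZmem ω hω)
  have haS' : ∀ x ∈ SX, a x ≠ 0 := by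
    intro x hx
    obtain ⟨ω, hω, rfl⟩ := hX.mem_toFinset.mp hx
    exact pr_ne_zero hω rfl
  have hbS' : ∀ y ∈ SY, b y ≠ 0 := by
    intro y hy
    obtain ⟨ω, hω, rfl⟩ := hY.mem_toFinset.mp hy
    exact pr_ne_zero hω rfl
  have hcS' : ∀ z ∈ SZ, c z ≠ 0 := by
    intro z hz
    obtain ⟨ω, hω, rfl⟩ := hZ.mem_toFinset.mp hz
    exact pr_ne_zero hω rfl
  have hbtop : ∀ y, b y ≠ ⊤ := fun y => pr_ne_top μ _
  have hctop : ∀ z, c z ≠ ⊤ := fun z => pr_ne_top μ _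
  have hbdec : ∀ y, b y = ∑ z ∈ SZ, q y z := by
    intro y
    exact pr_fiber_sum μ {ω | Y ω = y} Z SZ hZmem
  have hsum_a : ∑ x ∈ SX, a x = 1 := by
    have h := pr_fiber_sum μ Set.univ X SX hXmem
    rw [pr_univ] at h
    have h2 : ∀ x ∈ SX, pr μ {ω | ω ∈ Set.univ ∧ X ω = x} = a x := fun x _ =>
      pr_congr (by intro ω hω; simp only [Set.mem_setOf_eq, Set.mem_univ, true_and])
    rw [Finset.sum_congr rfl h2] at h
    exact h.symm
  have hsum_b : ∑ y ∈ SY, b y = 1 := by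
    have h := pr_fiber_sum μ Set.univ Y SY hYmem
    rw [pr_univ] at h
    have h2 : ∀ y ∈ SY, pr μ {ω | ω ∈ Set.univ ∧ Y ω = y} = b y := fun y _ =>
      pr_congr (by intro ω hω; simp only [Set.mem_setOf_eq, Set.mem_univ, true_and])
    rw [Finset.sum_congr rfl h2] at h
    exact h.symm
  have hsum_c : ∑ z ∈ SZ, c z = 1 := by
    have h := pr_fiber_sum μ Set.univ Z SZ hZmem
    rw [pr_univ] at h
    have h2 : ∀ z ∈ SZ, pr μ {ω | ω ∈ Set.univ ∧ Z ω = z} = c z := fun z _ =>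
      pr_congr (by intro ω hω; simp only [Set.mem_setOf_eq, Set.mem_univ, true_and])
    rw [Finset.sum_congr rfl h2] at h
    exact h.symm
  have hid2 : ∀ x z, a x * c z = ∑ y ∈ SY.filter (fun y => f (y, z) = x), q y z := by
    intro x z
    have h1 : pr μ {ω | X ω = x ∧ Z ω = z} = a x * c z := hXZ x z
    have h2 := pr_fiber_sum μ {ω | X ω = x ∧ Z ω = z} Y SY hYmem
    have h3 : ∀ y ∈ SY, pr μ {ω | ω ∈ {ω | X ω = x ∧ Z ω = z} ∧ Y ω = y}
        = if f (y, z) = x then q y z else 0 := by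
      intro y _
      by_cases hfy : f (y, z) = x
      · rw [if_pos hfy]
        refine pr_congr ?_
        intro ω hω
        constructor
        · rintro ⟨⟨hx', hz'⟩, hy'⟩
          exact ⟨hy', hz'⟩
        · rintro ⟨hy', hz'⟩
          have hxx : X ω = x := by rw [hf ω hω, hy', hz']; exact hfy
          exact ⟨⟨hxx, hz'⟩, hy'⟩
      · rw [if_neg hfy]
        refine pr_eq_zero_iff.mpr ?_
        rintro ω hω ⟨⟨hx', hz'⟩, hy'⟩
        refine hfy ?_
        rw [← hy', ← hz', ← hf ω hω]
        exact hx'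
    rw [← h1, h2, Finset.sum_congr rfl h3]
    exact (Finset.sum_filter _ _).symm
  have hid1 : ∀ x y, a x * b y = ∑ z ∈ SZ.filter (fun z => f (y, z) = x), q y z := by
    intro x y
    have h1 : pr μ {ω | X ω = x ∧ Y ω = y} = a x * b y := hXY x y
    have h2 := pr_fiber_sum μ {ω | X ω = x ∧ Y ω = y} Z SZ hZmem
    have h3 : ∀ z ∈ SZ, pr μ {ω | ω ∈ {ω | X ω = x ∧ Y ω = y} ∧ Z ω = z}
        = if f (y, z) = x then q y z else 0 := by
      intro z _
      by_cases hfy : f (y, z) = x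
      · rw [if_pos hfy]
        refine pr_congr ?_
        intro ω hω
        constructor
        · rintro ⟨⟨hx', hy'⟩, hz'⟩
          exact ⟨hy', hz'⟩
        · rintro ⟨hy', hz'⟩
          have hxx : X ω = x := by rw [hf ω hω, hy', hz']; exact hfy
          exact ⟨⟨hxx, hy'⟩, hz'⟩
      · rw [if_neg hfy]
        refine pr_eq_zero_iff.mpr ?_
        rintro ω hω ⟨⟨hx', hy'⟩, hz'⟩
        refine hfy ?_
        rw [← hy', ← hz', ← hf ω hω]
        exact hx'
    rw [← h1, h2, Finset.sum_congr rfl h3]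
    exact (Finset.sum_filter _ _).symm
  have hTa_le_one : ∀ k, topSum a SX k ≤ 1 :=
    fun k => (topSum_le_total a SX k).trans hsum_a.le
  have hkey : ∀ (k : ℕ) (t : Finset ℕ), t ⊆ SY → t.card ≤ k → ∀ z,
      ∑ y ∈ t, q y z ≤ topSum a SX k * c z := by
    intro k t hsub hcard z
    have h1 : ∑ y ∈ t, q y z
        = ∑ x ∈ t.image (fun y => f (y, z)), ∑ y ∈ t.filter (fun y => f (y, z) = x), q y z :=
      (Finset.sum_fiberwise_of_maps_to (fun y hy => Finset.mem_image_of_mem _ hy) _).symm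
    have h2 : ∀ x ∈ t.image (fun y => f (y, z)),
        ∑ y ∈ t.filter (fun y => f (y, z) = x), q y z ≤ a x * c z := by
      intro x _
      rw [hid2 x z]
      exact Finset.sum_le_sum_of_subset (Finset.filter_subset_filter _ hsub)
    rw [h1]
    calc ∑ x ∈ t.image (fun y => f (y, z)), ∑ y ∈ t.filter (fun y => f (y, z) = x), q y z
        ≤ ∑ x ∈ t.image (fun y => f (y, z)), a x * c z := Finset.sum_le_sum h2
      _ = (∑ x ∈ t.image (fun y => f (y, z)), a x) * c z := (Finset.sum_mul _ _ _).symm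
      _ ≤ topSum a SX k * c z := by
          refine mul_le_mul_left ?_ _
          exact le_topSum haS _ ((Finset.card_image_le).trans hcard)
  have htop_eq : ∀ k, topSum a SX k = topSum b SY k := by
    intro k
    apply le_antisymm
    · obtain ⟨s, hsS, hscard, hssum⟩ := topSum_exists a SX k
      obtain ⟨t, htcard, hle⟩ := hmaj s
      calc topSum a SX k = ∑ x ∈ s, a x := hssum.symm
        _ ≤ ∑ x ∈ t, b x := hle
        _ ≤ topSum b SY k := le_topSum hbS t (htcard.trans hscard)
    · obtain ⟨t, htS, htcard, htsum⟩ := topSum_exists b SY k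
      calc topSum b SY k = ∑ y ∈ t, b y := htsum.symm
        _ = ∑ y ∈ t, ∑ z ∈ SZ, q y z := Finset.sum_congr rfl fun y _ => hbdec y
        _ = ∑ z ∈ SZ, ∑ y ∈ t, q y z := Finset.sum_comm
        _ ≤ ∑ z ∈ SZ, topSum a SX k * c z := Finset.sum_le_sum fun z _ => hkey k t htS htcard z
        _ = topSum a SX k * ∑ z ∈ SZ, c z := (Finset.mul_sum _ _ _).symm
        _ = topSum a SX k := by rw [hsum_c, mul_one]
  have hiii : ∀ (k : ℕ) (t : Finset ℕ), t ⊆ SY → t.card ≤ k →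
      (∑ y ∈ t, b y = topSum b SY k) → ∀ z ∈ SZ, ∑ y ∈ t, q y z = topSum b SY k * c z := by
    intro k t hsub hcard htop
    have hle : ∀ z ∈ SZ, ∑ y ∈ t, q y z ≤ topSum b SY k * c z := by
      intro z _
      rw [← htop_eq k]
      exact hkey k t hsub hcard z
    have heq : ∑ z ∈ SZ, (∑ y ∈ t, q y z) = ∑ z ∈ SZ, topSum b SY k * c z := by
      calc ∑ z ∈ SZ, (∑ y ∈ t, q y z) = ∑ y ∈ t, ∑ z ∈ SZ, q y z := Finset.sum_comm
        _ = ∑ y ∈ t, b y := Finset.sum_congr rfl fun y _ => (hbdec y).symm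
        _ = topSum b SY k := htop
        _ = topSum b SY k * ∑ z ∈ SZ, c z := by rw [hsum_c, mul_one]
        _ = ∑ z ∈ SZ, topSum b SY k * c z := Finset.mul_sum _ _ _
    have hfin : ∑ z ∈ SZ, topSum b SY k * c z ≠ ⊤ := by
      rw [← Finset.mul_sum, hsum_c, mul_one]
      exact ne_top_of_le_ne_top ENNReal.one_ne_top (htop_eq k ▸ hTa_le_one k)
    exact sum_eq_of_le_of_sum_eq hle heq hfin
  have hP : ∀ (k : ℕ) (t : Finset ℕ), t ⊆ SY → t.card ≤ k →
      (∑ y ∈ t, b y = topSum b SY k) → ∀ y ∈ t, ∀ z ∈ SZ, q y z = b y * c z := by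
    intro k
    induction k with
    | zero =>
      intro t hsub hcard _ y hy z hz
      have ht0 : t = ∅ := Finset.card_eq_zero.mp (Nat.le_zero.mp hcard)
      rw [ht0] at hy
      exact absurd hy (Finset.notMem_empty y)
    | succ k ih =>
      intro t hsub hcard htop
      by_cases hcard' : t.card ≤ k
      · have h0 : topSum b SY k ≤ ∑ y ∈ t, b y := by
          rw [htop]; exact topSum_mono b SY (Nat.le_succ k)
        exact ih t hsub hcard' (le_antisymm (le_topSum hbS t hcard') h0)
      · have hcard2 : t.card = k + 1 := by omega
        have htne : t.Nonempty := Finset.card_pos.mp (by omega)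
        obtain ⟨y0, hy0t, hy0min⟩ := Finset.exists_min_image t b htne
        have hct' : (t.erase y0).card = k := by
          rw [Finset.card_erase_of_mem hy0t]; omega
        have h5 : ∑ y ∈ t.erase y0, b y ≤ topSum b SY k := le_topSum hbS _ (le_of_eq hct')
        have h6 : topSum b SY k ≤ ∑ y ∈ t.erase y0, b y := by
          obtain ⟨s, hsS, hscard, hssum⟩ := topSum_exists b SY k
          have hns : ¬ t ⊆ s := fun hts => hcard' ((Finset.card_le_card hts).trans hscard)
          obtain ⟨y1, hy1t, hy1s⟩ := Finset.not_subset.mp hns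
          have h7 : b y1 + ∑ y ∈ s, b y ≤ topSum b SY (k + 1) := by
            have h7' := le_topSum (k := k + 1) hbS (insert y1 s)
              (by rw [Finset.card_insert_of_notMem hy1s]; omega)
            rwa [Finset.sum_insert hy1s] at h7'
          have h8 : b y0 + ∑ y ∈ t.erase y0, b y = ∑ y ∈ t, b y := Finset.add_sum_erase t b hy0t
          have h9 : b y0 + topSum b SY k ≤ b y0 + ∑ y ∈ t.erase y0, b y := by
            calc b y0 + topSum b SY k = b y0 + ∑ y ∈ s, b y := by rw [hssum]
              _ ≤ b y1 + ∑ y ∈ s, b y := add_le_add_left (hy0min y1 hy1t) _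
              _ ≤ topSum b SY (k + 1) := h7
              _ = ∑ y ∈ t, b y := htop.symm
              _ = b y0 + ∑ y ∈ t.erase y0, b y := h8.symm
          exact (ENNReal.add_le_add_iff_left (hbtop y0)).mp h9
        have ht'top : ∑ y ∈ t.erase y0, b y = topSum b SY k := le_antisymm h5 h6
        have iht' : ∀ y ∈ t.erase y0, ∀ z ∈ SZ, q y z = b y * c z :=
          ih (t.erase y0) ((Finset.erase_subset y0 t).trans hsub) (le_of_eq hct') ht'top
        intro y hy z hz
        by_cases hyy0 : y = y0
        · subst hyy0
          have heqz := hiii (k+1) t hsub hcard htop z hz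
          have h10 : ∑ y' ∈ t.erase y, q y' z = ∑ y' ∈ t.erase y, b y' * c z :=
            Finset.sum_congr rfl fun y' hy' => iht' y' hy' z hz
          have h11 : q y z + ∑ y' ∈ t.erase y, q y' z
              = b y * c z + ∑ y' ∈ t.erase y, b y' * c z := by
            calc q y z + ∑ y' ∈ t.erase y, q y' z = ∑ y' ∈ t, q y' z :=
                Finset.add_sum_erase t (fun y' => q y' z) hy
              _ = topSum b SY (k+1) * c z := heqz
              _ = (∑ y' ∈ t, b y') * c z := by rw [htop]
              _ = (b y + ∑ y' ∈ t.erase y, b y') * c z := by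
                  rw [Finset.add_sum_erase t b hy]
              _ = b y * c z + (∑ y' ∈ t.erase y, b y') * c z := add_mul _ _ _
              _ = b y * c z + ∑ y' ∈ t.erase y, b y' * c z := by rw [Finset.sum_mul]
          rw [h10] at h11
          have hfin2 : ∑ y' ∈ t.erase y, b y' * c z ≠ ⊤ := by
            refine (fun h => ?_)
            have := (ENNReal.sum_eq_top.mp h)
            obtain ⟨y', _, hy'⟩ := this
            exact (ENNReal.mul_ne_top (hbtop y') (hctop z)) hy'
          rw [add_comm (q y z), add_comm (b y * c z)] at h11
          exact (ENNReal.add_right_inj hfin2).mp h11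
        · exact iht' y (Finset.mem_erase.mpr ⟨hyy0, hy⟩) z hz
  have hTb1 : topSum b SY SY.card = 1 :=
    le_antisymm ((topSum_le_total b SY _).trans hsum_b.le)
      (by rw [← hsum_b]; exact le_topSum hbS SY le_rfl)
  have hYZ : ∀ y ∈ SY, ∀ z ∈ SZ, q y z = b y * c z :=
    hP SY.card SY Finset.Subset.rfl le_rfl (hsum_b.trans hTb1.symm)
  have hYZall : ∀ y z, q y z = b y * c z := by
    intro y z
    by_cases hy : y ∈ SY
    · by_cases hz : z ∈ SZ
      · exact hYZ y hy z hz
      · have hcz : c z = 0 := by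
          by_contra h; exact hz (hcS z h)
        have hle : q y z ≤ c z := pr_mono fun ω hω => hω.2
        have hq0 : q y z = 0 := le_antisymm (hcz ▸ hle) zero_le
        rw [hq0, hcz, mul_zero]
    · have hby : b y = 0 := by
        by_contra h; exact hy (hbS y h)
      have hle : q y z ≤ b y := pr_mono fun ω hω => hω.1
      have hq0 : q y z = 0 := le_antisymm (hby ▸ hle) zero_le
      rw [hq0, hby, zero_mul]
  have hdag : ∀ z ∈ SZ, ∀ x, a x = ∑ y ∈ SY.filter (fun y => f (y, z) = x), b y := by
    intro z hz x
    have h1 : ∑ y ∈ SY.filter (fun y => f (y, z) = x), q y z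
        = (∑ y ∈ SY.filter (fun y => f (y, z) = x), b y) * c z := by
      rw [Finset.sum_mul]
      exact Finset.sum_congr rfl fun y hy => hYZ y (Finset.mem_of_mem_filter y hy) z hz
    have h2 := hid2 x z
    rw [h1] at h2
    exact mul_right_cancel_ennreal (hcS' z hz) (hctop z) h2
  have hge : ∀ z ∈ SZ, ∀ y ∈ SY, b y ≤ a (f (y, z)) := by
    intro z hz y hy
    rw [hdag z hz (f (y, z))]
    exact Finset.single_le_sum (fun _ _ => zero_le) (Finset.mem_filter.mpr ⟨hy, rfl⟩)
  have himg : ∀ z ∈ SZ, SY.image (fun y => f (y, z)) = SX := by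
    intro z hz
    apply Finset.Subset.antisymm
    · intro x hx
      obtain ⟨y, hy, rfl⟩ := Finset.mem_image.mp hx
      refine haS _ (fun h0 => hbS' y hy ?_)
      exact le_antisymm (h0 ▸ hge z hz y hy) zero_le
    · intro x hx
      have hne : ∑ y ∈ SY.filter (fun y => f (y, z) = x), b y ≠ 0 := by
        rw [← hdag z hz x]; exact haS' x hx
      obtain ⟨y, hy, _⟩ := Finset.exists_ne_zero_of_sum_ne_zero hne
      obtain ⟨hySY, hfy⟩ := Finset.mem_filter.mp hy
      exact Finset.mem_image.mpr ⟨y, hySY, hfy⟩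
  obtain ⟨ω0, hω0⟩ := μ.support_nonempty
  have hz0 : Z ω0 ∈ SZ := hZmem ω0 hω0
  have hcard_le : SX.card ≤ SY.card := by
    rw [← himg (Z ω0) hz0]
    exact Finset.card_image_le
  have hcard_ge : SY.card ≤ SX.card := by
    have hTb1' : topSum b SY SX.card = 1 := by
      rw [← htop_eq]
      refine le_antisymm ((topSum_le_total a SX _).trans hsum_a.le) ?_
      rw [← hsum_a]; exact le_topSum haS SX le_rfl
    obtain ⟨t, htS, htc, htsum⟩ := topSum_exists b SY SX.card
    have hSYt : SY ⊆ t := by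
      intro y hy
      by_contra hyt
      have hts : t ⊆ SY.erase y := fun u hu =>
        Finset.mem_erase.mpr ⟨fun he => hyt (he ▸ hu), htS hu⟩
      have h1 : (1 : ENNReal) ≤ ∑ y' ∈ SY.erase y, b y' := by
        calc (1 : ENNReal) = ∑ y' ∈ t, b y' := (htsum.trans hTb1').symm
          _ ≤ ∑ y' ∈ SY.erase y, b y' := Finset.sum_le_sum_of_subset hts
      have h2 : (1 : ENNReal) < 1 + b y := ENNReal.lt_add_right ENNReal.one_ne_top (hbS' y hy)
      have h3 : 1 + b y ≤ ∑ y' ∈ SY.erase y, b y' + b y := add_le_add_left h1 _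
      have h4 : ∑ y' ∈ SY.erase y, b y' + b y = 1 := by
        rw [add_comm, Finset.add_sum_erase SY b hy, hsum_b]
      exact absurd (h2.trans_le (h3.trans_eq h4)) (lt_irrefl 1)
    exact (Finset.card_le_card hSYt).trans htc
  have hcard : SX.card = SY.card := le_antisymm hcard_le hcard_ge
  have hinj : ∀ z ∈ SZ, Set.InjOn (fun y => f (y, z)) ↑SY := by
    intro z hz
    refine Finset.card_image_iff.mp ?_
    rw [himg z hz, hcard]
  have hfilter : ∀ z ∈ SZ, ∀ y ∈ SY, SY.filter (fun y' => f (y', z) = f (y, z)) = {y} := by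
    intro z hz y hy
    apply Finset.ext
    intro y'
    simp only [Finset.mem_filter, Finset.mem_singleton]
    constructor
    · rintro ⟨hy', heq⟩
      exact hinj z hz (Finset.mem_coe.mpr hy') (Finset.mem_coe.mpr hy) heq
    · rintro rfl
      exact ⟨hy, rfl⟩
  have hval : ∀ z ∈ SZ, ∀ y ∈ SY, a (f (y, z)) = b y := by
    intro z hz y hy
    rw [hdag z hz (f (y, z)), hfilter z hz y hy, Finset.sum_singleton]
  have hconst : ∀ x ∈ SX, ∀ y ∈ SY, a x = b y := by
    intro x hx y hy
    have h1 : ∑ z ∈ SZ.filter (fun z => f (y, z) = x), q y z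
        = b y * ∑ z ∈ SZ.filter (fun z => f (y, z) = x), c z := by
      rw [Finset.mul_sum]
      exact Finset.sum_congr rfl fun z hzf => hYZ y hy z (Finset.mem_of_mem_filter z hzf)
    have h2 := hid1 x y
    rw [h1, mul_comm (a x) (b y)] at h2
    have h3 : a x = ∑ z ∈ SZ.filter (fun z => f (y, z) = x), c z :=
      (ENNReal.mul_right_inj (hbS' y hy) (hbtop y)).mp h2
    have hne : ∑ z ∈ SZ.filter (fun z => f (y, z) = x), c z ≠ 0 := by
      rw [← h3]; exact haS' x hx
    obtain ⟨z1, hz1, _⟩ := Finset.exists_ne_zero_of_sum_ne_zero hne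
    obtain ⟨hz1S, hfz1⟩ := Finset.mem_filter.mp hz1
    rw [← hfz1]
    exact hval z1 hz1S y hy
  have hx0 : X ω0 ∈ SX := hXmem ω0 hω0
  have hy0 : Y ω0 ∈ SY := hYmem ω0 hω0
  have hlpos : 1 ≤ SX.card := Finset.card_pos.mpr ⟨X ω0, hx0⟩
  have hconstX : ∀ x ∈ SX, a x = a (X ω0) := fun x hx =>
    (hconst x hx (Y ω0) hy0).trans (hconst (X ω0) hx0 (Y ω0) hy0).symm
  have hone : (SX.card : ENNReal) * a (X ω0) = 1 := by
    rw [← hsum_a, Finset.sum_congr rfl hconstX, Finset.sum_const, nsmul_eq_mul]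
  have hinv : a (X ω0) = (SX.card : ENNReal)⁻¹ := by
    have hl0 : (SX.card : ENNReal) ≠ 0 := Nat.cast_ne_zero.mpr (by omega)
    have hlt : (SX.card : ENNReal) ≠ ⊤ := ENNReal.natCast_ne_top _
    calc a (X ω0) = 1 * a (X ω0) := (one_mul _).symm
      _ = ((SX.card : ENNReal)⁻¹ * SX.card) * a (X ω0) := by
          rw [ENNReal.inv_mul_cancel hl0 hlt]
      _ = (SX.card : ENNReal)⁻¹ * ((SX.card : ENNReal) * a (X ω0)) := mul_assoc _ _ _
      _ = (SX.card : ENNReal)⁻¹ := by rw [hone, mul_one]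
  refine ⟨⟨SX.card, hlpos, ⟨SX, rfl, ?_, ?_⟩, ⟨SY, hcard.symm, ?_, ?_⟩⟩, ?_, ?_⟩
  · intro x hx
    exact (hconstX x hx).trans hinv
  · intro x hx
    by_contra h
    exact hx (haS x h)
  · intro y hy
    have hba : b y = a (X ω0) := (hconst (X ω0) hx0 y hy).symm
    exact hba.trans hinv
  · intro y hy
    by_contra h
    exact hy (hbS y h)
  · exact hYZall
  · refine ⟨fun p => if hp : ∃ y, y ∈ SY ∧ f (y, p.2) = p.1 then hp.choose else 0, ?_⟩
    intro ω hω
    have hp : ∃ y, y ∈ SY ∧ f (y, Z ω) = X ω := ⟨Y ω, hYmem ω hω, (hf ω hω).symm⟩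
    show Y ω = if hp' : ∃ y, y ∈ SY ∧ f (y, Z ω) = X ω then hp'.choose else 0
    rw [dif_pos hp]
    obtain ⟨hch1, hch2⟩ := hp.choose_spec
    have heq : (fun y => f (y, Z ω)) hp.choose = (fun y => f (y, Z ω)) (Y ω) := by
      show f (hp.choose, Z ω) = f (Y ω, Z ω)
      rw [hch2, hf ω hω]
    exact (hinj (Z ω) (hZmem ω hω) (Finset.mem_coe.mpr hch1)
      (Finset.mem_coe.mpr (hYmem ω hω)) heq).symm


end Paper
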